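/- Let X be a universally complete f-algebra with unit e and x, y, z ∈ X_+ with x ≤ y·z. Then there exist a, b ∈ X_+ with 0 ≤ a ≤ y, 0 ≤ b ≤ z and x = a·b. (Finite-element version of the multiplicative decomposition; e.g. a = y and b = y*·x works when x lies in the band generated by y.) -/
import Mathlib


/-- Multiplicative decomposition in a universally complete `f`-algebra with
unit: if `0 ≤ x ≤ y·z` with `y, z ≥ 0`, then `x = a·b` for some
`0 ≤ a ≤ y` and `0 ≤ b ≤ z`. -/
theorem multiplicative_decomposition {X : Type*} [ConditionallyCompleteLattice X]
    [CommRing X] [CovariantClass X X (· + ·) (· ≤ ·)]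
    (hmul : ∀ a b : X, 0 ≤ a → 0 ≤ b → 0 ≤ a * b)
    (hfa : ∀ a b c : X, a ⊓ b = 0 → 0 ≤ c → (c * a) ⊓ b = 0)
    (comp : X → X)
    (hcomp : ∀ x : X, 0 ≤ x → IsLUB (Set.range fun n : ℕ => 1 ⊓ (n • x)) (comp x))
    (pinv : X → X)
    (hpinv : ∀ x : X, 0 ≤ x → 0 ≤ pinv x ∧
      (∀ y : X, 0 ≤ y → x ⊓ y = 0 → pinv x ⊓ y = 0) ∧ x * pinv x = comp x)
    (x y z : X) (hx : 0 ≤ x) (hy : 0 ≤ y) (hz : 0 ≤ z) (h : x ≤ y * z) :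
    ∃ a b : X, 0 ≤ a ∧ a ≤ y ∧ 0 ≤ b ∧ b ≤ z ∧ x = a * b := by
  obtain ⟨hp0, -, hpy⟩ := hpinv y hy
  have hlub := hcomp y hy
  set c := comp y with hc
  have hc0 : 0 ≤ c := hpy ▸ hmul y (pinv y) hy hp0
  have hc1 : c ≤ 1 := hlub.2 (by rintro _ ⟨n, rfl⟩; exact inf_le_left)
  set d := (1 : X) - c with hd
  have hd0 : 0 ≤ d := sub_nonneg.mpr hc1
  set t := y ⊓ d with ht
  have ht0 : 0 ≤ t := le_inf hy hd0
  have key : ∀ n : ℕ, n • t ≤ c := by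
    intro n
    induction n with
    | zero => simpa using hc0
    | succ n ih =>
      have h1 : (n + 1) • t ≤ 1 := by
        calc (n + 1) • t = n • t + t := succ_nsmul t n
          _ ≤ c + d := add_le_add ih inf_le_right
          _ = 1 := by rw [hd]; ring
      have h2 : (n + 1) • t ≤ (n + 1) • y :=
        nsmul_le_nsmul_right inf_le_left (n + 1)
      exact le_trans (le_inf h1 h2) (hlub.1 ⟨n + 1, rfl⟩)
  have ht00 : t = 0 := by
    have hbdd : BddAbove (Set.range fun n : ℕ => n • t) :=
      ⟨c, by rintro _ ⟨n, rfl⟩; exact key n⟩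
    have hne : (Set.range fun n : ℕ => n • t).Nonempty := ⟨0 • t, 0, rfl⟩
    set s := sSup (Set.range fun n : ℕ => n • t) with hs
    have hub : ∀ n : ℕ, n • t ≤ s - t := by
      intro n
      have h3 : (n + 1) • t ≤ s := le_csSup hbdd ⟨n + 1, rfl⟩
      rw [succ_nsmul] at h3
      exact le_sub_iff_add_le.mpr h3
    have h4 : s ≤ s - t := csSup_le hne (by rintro _ ⟨n, rfl⟩; exact hub n)
    have h5 : s + t ≤ s + 0 := by
      have := le_sub_iff_add_le.mp h4
      simpa [add_comm] using this
    exact le_antisymm (le_of_add_le_add_left h5) ht0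
  have hyd : y ⊓ d = 0 := ht00
  have hxzd : (z * y) ⊓ d = 0 := hfa y d z hyd hz
  have hxd : x ⊓ d = 0 := by
    refine le_antisymm ?_ (le_inf hx hd0)
    calc x ⊓ d ≤ (z * y) ⊓ d := inf_le_inf_right d (by rwa [mul_comm])
      _ = 0 := hxzd
  have hxd2 : (x * d) ⊓ x = 0 := hfa d x x (by rwa [inf_comm]) hx
  have hxdle : x * d ≤ x := by
    have h6 : 0 ≤ x * c := hmul x c hx hc0
    have h12 : x - x * d = x * c := by rw [hd]; ring
    rw [← sub_nonneg, h12]; exact h6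
  have hxd0 : x * d = 0 := by
    rw [← hxd2]
    exact (inf_eq_left.mpr hxdle).symm
  have hxc : x * c = x := by
    have : x * c + x * d = x := by rw [hd]; ring
    rw [hxd0, add_zero] at this
    exact this
  refine ⟨y, pinv y * x, hy, le_refl y, hmul _ _ hp0 hx, ?_, ?_⟩
  · -- pinv y * x ≤ z
    have h7 : pinv y * x ≤ pinv y * (y * z) := by
      have := hmul (pinv y) (y * z - x) hp0 (sub_nonneg.mpr h)
      have h8 : pinv y * (y * z) - pinv y * x = pinv y * (y * z - x) := by ring
      rw [← sub_nonneg, h8]; exact this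
    have h9 : pinv y * (y * z) = c * z := by rw [← hpy]; ring
    have h10 : c * z ≤ z := by
      have := hmul d z hd0 hz
      have h11 : z - c * z = d * z := by rw [hd]; ring
      rw [← sub_nonneg, h11]; exact this
    calc pinv y * x ≤ pinv y * (y * z) := h7
      _ = c * z := h9
      _ ≤ z := h10
  · rw [← mul_assoc, hpy, mul_comm c x, hxc]
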